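/- Let H = L²[0,1] and define on the full Fock space F(H) the positive Fock operator L with L_1 = multiplication by t on H, L_2 = id on H ⊗ H, and L_n = 0 for n ≥ 3. Then L is bounded, but for every nonzero x ∈ H the corresponding creation operator a*(x) on the induced interacting Fock space is unbounded: with y_n := 1_{[0,1/n]}, the quotient ‖a*(x) y_n‖_I / ‖y_n‖_I = ‖x‖ √(2n) → ∞. -/

import Mathlib

open MeasureTheory
open scoped InnerProductSpace

/-- Let `H = L²[0,1]` and let `L₁` be the (1-particle component of the)
positive Fock operator `L` given by multiplication with `t` (the other components being
`L₂ = id` and `Lₙ = 0`, `n ≥ 3`, which are trivially bounded).  Then `L₁` (hence `L`) is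
bounded, but for every `x ≠ 0` the creation operator `a*(x)` of the induced interacting
Fock space is unbounded: since `‖a*(x) y‖_I = ‖x‖·‖y‖_{L²}` (as `L₂ = id`) and
`‖y‖_I² = re ⟪y, L₁ y⟫ = ∫ t |y(t)|² dt`, there is no constant `C` with
`‖x‖·‖y‖ ≤ C·‖y‖_I` for all `y` (witnessed by `y_n = 1_{[0,1/n]}`, for which the quotient
is `‖x‖ √(2n) → ∞`). -/
theorem bounded_L_unbounded_creators
    (L₁ : Lp ℂ 2 (volume.restrict (Set.Icc (0:ℝ) 1)) →ₗ[ℂ]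
          Lp ℂ 2 (volume.restrict (Set.Icc (0:ℝ) 1)))
    (hL₁ : ∀ f : Lp ℂ 2 (volume.restrict (Set.Icc (0:ℝ) 1)),
      (L₁ f : ℝ → ℂ) =ᵐ[volume.restrict (Set.Icc (0:ℝ) 1)] fun t => (t : ℂ) * f t) :
    (∃ C : ℝ, ∀ f, ‖L₁ f‖ ≤ C * ‖f‖) ∧
    (∀ c : ℝ, 0 < c →
      ¬ ∃ C : ℝ, ∀ f : Lp ℂ 2 (volume.restrict (Set.Icc (0:ℝ) 1)),
        c * ‖f‖ ≤ C * Real.sqrt (⟪f, L₁ f⟫_ℂ).re) := by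
  constructor
  · refine ⟨1, fun f => ?_⟩
    rw [one_mul, Lp.norm_def, Lp.norm_def]
    have hae : ∀ᵐ t ∂(volume.restrict (Set.Icc (0:ℝ) 1)), ‖(L₁ f : ℝ → ℂ) t‖ ≤ ‖(f : ℝ → ℂ) t‖ := by
      filter_upwards [hL₁ f, ae_restrict_mem measurableSet_Icc] with t h1 h2
      rw [h1, norm_mul]
      have ht1 : ‖(t:ℂ)‖ ≤ 1 := by
        rw [Complex.norm_real, Real.norm_eq_abs, abs_le]
        exact ⟨by linarith [h2.1], h2.2⟩
      nlinarith [norm_nonneg ((f : ℝ → ℂ) t), norm_nonneg ((t:ℂ))]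
    exact ENNReal.toReal_mono (Lp.eLpNorm_ne_top f) (eLpNorm_mono_ae hae)
  · rintro c hc ⟨C, hC⟩
    set C' := max C 1 with hC'def
    have hC'pos : (0:ℝ) < C' := lt_of_lt_of_le one_pos (le_max_right _ _)
    obtain ⟨n, hn⟩ := exists_nat_gt (C' ^ 2 / (2 * c ^ 2))
    set b : ℝ := 1 / (n + 1) with hb
    have hb0 : (0:ℝ) < b := by positivity
    have hb1 : b ≤ 1 := by
      rw [hb, div_le_one (by positivity)]
      have : (0:ℝ) ≤ (n:ℝ) := Nat.cast_nonneg n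
      linarith
    set s := Set.Ioc (0:ℝ) b with hs
    have hsub : s ⊆ Set.Icc 0 1 := fun t ht => ⟨le_of_lt ht.1, le_trans ht.2 hb1⟩
    have hμs : volume.restrict (Set.Icc (0:ℝ) 1) s = ENNReal.ofReal b := by
      rw [Measure.restrict_apply measurableSet_Ioc, Set.inter_eq_left.mpr hsub,
        Real.volume_Ioc, sub_zero]
    have hμs' : volume.restrict (Set.Icc (0:ℝ) 1) s ≠ ⊤ := by simp [hμs]
    set f := indicatorConstLp 2 measurableSet_Ioc hμs' (1:ℂ) with hf
    have hnorm : ‖f‖ = Real.sqrt b := by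
      rw [hf, norm_indicatorConstLp (by norm_num) (by norm_num)]
      rw [measureReal_def, ← hs, hμs, ENNReal.toReal_ofReal hb0.le, Real.sqrt_eq_rpow]
      norm_num
    have hinner : (⟪f, L₁ f⟫_ℂ).re = b ^ 2 / 2 := by
      have h1 : ⟪f, L₁ f⟫_ℂ = ∫ t, (starRingEnd ℂ) ((f : ℝ → ℂ) t) * (L₁ f : ℝ → ℂ) t ∂(volume.restrict (Set.Icc (0:ℝ) 1)) := by
        rw [L2.inner_def]
        simp [RCLike.inner_apply]
        exact integral_congr_ae (Filter.Eventually.of_forall fun t => mul_comm _ _)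
      have h2 : (fun t => (starRingEnd ℂ) ((f : ℝ → ℂ) t) * (L₁ f : ℝ → ℂ) t)
          =ᵐ[volume.restrict (Set.Icc (0:ℝ) 1)] s.indicator (fun t => (t:ℂ)) := by
        filter_upwards [indicatorConstLp_coeFn (p := 2) (μ := volume.restrict (Set.Icc (0:ℝ) 1))
          (hs := measurableSet_Ioc) (hμs := hμs') (c := (1:ℂ)), hL₁ f] with t ha hb'
        rw [hb', ha]
        by_cases ht : t ∈ s
        · simp [Set.indicator_of_mem ht, Set.indicator_of_mem (show t ∈ Set.Ioc 0 b from ht)]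
        · simp [Set.indicator_of_notMem ht, Set.indicator_of_notMem (show t ∉ Set.Ioc 0 b from ht)]
      rw [h1, integral_congr_ae h2, integral_indicator measurableSet_Ioc,
        Measure.restrict_restrict measurableSet_Ioc, Set.inter_eq_left.mpr hsub]
      have h3 : ∫ t in s, (t:ℂ) = ((∫ t in s, t : ℝ) : ℂ) := by
        have := integral_ofReal (𝕜 := ℂ) (μ := volume.restrict s) (f := fun t : ℝ => t)
        exact_mod_cast this
      have h4 : (∫ t in s, t : ℝ) = b ^ 2 / 2 := by
        rw [hs, ← intervalIntegral.integral_of_le hb0.le, integral_id]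
        ring
      rw [h3, h4, Complex.ofReal_re]
    have hkey := hC f
    rw [hnorm, hinner] at hkey
    have hsq : Real.sqrt (b ^ 2 / 2) = b / Real.sqrt 2 := by
      have h : (b / Real.sqrt 2) ^ 2 = b ^ 2 / 2 := by
        rw [div_pow, Real.sq_sqrt (by norm_num : (0:ℝ) ≤ 2)]
      rw [← h, Real.sqrt_sq (by positivity)]
    rw [hsq] at hkey
    have hkey' : c * Real.sqrt b ≤ C' * (b / Real.sqrt 2) :=
      le_trans hkey (mul_le_mul_of_nonneg_right (le_max_left C 1) (by positivity))
    have hsb : Real.sqrt b > 0 := Real.sqrt_pos.mpr hb0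
    have hsb2 : Real.sqrt b ^ 2 = b := Real.sq_sqrt hb0.le
    have hs2 : Real.sqrt 2 > 0 := by positivity
    have hs22 : Real.sqrt 2 ^ 2 = 2 := Real.sq_sqrt (by norm_num)
    -- from hkey' : c * √b ≤ C' * b / √2, derive 2c² ≤ C'² b
    have h5 : 2 * c ^ 2 ≤ C' ^ 2 * b := by
      have h6 : c * Real.sqrt b * Real.sqrt 2 ≤ C' * b := by
        have h7 := mul_le_mul_of_nonneg_right hkey' hs2.le
        have h8 : C' * (b / Real.sqrt 2) * Real.sqrt 2 = C' * b := by
          field_simp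
        linarith [h7, h8]
      have h6sq := pow_le_pow_left₀ (by positivity : (0:ℝ) ≤ c * Real.sqrt b * Real.sqrt 2) h6 2
      have e1 : (c * Real.sqrt b * Real.sqrt 2) ^ 2 = 2 * c ^ 2 * b := by
        rw [mul_pow, mul_pow, hsb2, hs22]; ring
      have e2 : (C' * b) ^ 2 = C' ^ 2 * b * b := by ring
      have h8 : 2 * c ^ 2 * b ≤ C' ^ 2 * b * b := by linarith [h6sq, e1, e2]
      exact le_of_mul_le_mul_right h8 hb0
    -- but hn gives C'² b < 2c²
    have h7 : C' ^ 2 * b < 2 * c ^ 2 := by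
      have hnn : C' ^ 2 / (2 * c ^ 2) < (n:ℝ) + 1 := by linarith
      have : C' ^ 2 < (2 * c ^ 2) * ((n:ℝ) + 1) := by
        rw [div_lt_iff₀ (by positivity)] at hnn
        linarith
      rw [hb]
      rw [mul_one_div, div_lt_iff₀ (by positivity)]
      linarith
    linarith
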